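/- Let (X,d) be a proper metric space, let σ be a conical geodesic bicombing on X, let x, y ∈ X, and let n ≥ 1 be an integer. Then there exist unique points p₀, p₁, …, pₙ ∈ X such that p₀ = x, pₙ = y, and p_i = σ(p_{i−1}, p_{i+1}, 1/2) for all 1 ≤ i ≤ n−1. Moreover, the map σ⁽ⁿ⁾ : X × X × [0,1] → X defined by σ⁽ⁿ⁾(x, y, (1−λ)·(i/n) + λ·((i+1)/n)) = σ(p_i, p_{i+1}, λ) for λ ∈ [0,1] and 0 ≤ i ≤ n−1 (with p_i = p_i(x,y) the unique points above) is a conical geodesic bicombing on X. -/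

import Mathlib

/-- A geodesic bicombing on a metric space `X`: a map `σ : X × X × [0,1] → X` such that
`σ x y 0 = x`, `σ x y 1 = y` and `dist (σ x y s) (σ x y t) = |s - t| * dist x y`
for all `s, t ∈ [0,1]`. -/
def IsGeodesicBicombing {X : Type*} [MetricSpace X] (σ : X → X → ℝ → X) : Prop :=
  (∀ x y : X, σ x y 0 = x) ∧ (∀ x y : X, σ x y 1 = y) ∧
    ∀ x y : X, ∀ s ∈ Set.Icc (0:ℝ) 1, ∀ t ∈ Set.Icc (0:ℝ) 1,
      dist (σ x y s) (σ x y t) = |s - t| * dist x y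

/-- A bicombing is conical if
`dist (σ x y t) (σ x' y' t) ≤ (1 - t) * dist x x' + t * dist y y'` for all `t ∈ [0,1]`. -/
def IsConical {X : Type*} [MetricSpace X] (σ : X → X → ℝ → X) : Prop :=
  ∀ x y x' y' : X, ∀ t ∈ Set.Icc (0:ℝ) 1,
    dist (σ x y t) (σ x' y' t) ≤ (1 - t) * dist x x' + t * dist y y'

/-- A bicombing is reversible if `σ x y t = σ y x (1 - t)` for all `t ∈ [0,1]`. -/
def IsReversible {X : Type*} [MetricSpace X] (σ : X → X → ℝ → X) : Prop :=
  ∀ x y : X, ∀ t ∈ Set.Icc (0:ℝ) 1, σ x y t = σ y x (1 - t)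

/-- The defining conditions of the subdivision points: `p 0 = x`, `p n = y`, and
`p i = σ (p (i-1)) (p (i+1)) (1/2)` for `1 ≤ i ≤ n - 1`. -/
def IsMidpointChain {X : Type*} [MetricSpace X] (σ : X → X → ℝ → X) (n : ℕ)
    (x y : X) (p : ℕ → X) : Prop :=
  p 0 = x ∧ p n = y ∧ ∀ i : ℕ, 1 ≤ i → i + 1 ≤ n → p i = σ (p (i - 1)) (p (i + 1)) (1/2)

open Filter Topology

lemma mdsb_wkey (n : ℕ) (hn : 1 ≤ n) (e : ℕ → ℕ → ℝ) (E : ℝ) (hE : 0 ≤ E)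
    (h0 : ∀ k, e k 0 ≤ 0) (hN : ∀ k, e k n ≤ 0)
    (hinit : ∀ i, 1 ≤ i → i + 1 ≤ n → e 0 i ≤ E)
    (hrec : ∀ k i, 1 ≤ i → i + 1 ≤ n → e (k+1) i ≤ (e k (i-1) + e k (i+1))/2) :
    ∀ k i, i ≤ n → e k i ≤ (1 - 1/(n:ℝ)^2)^k * ((i:ℝ) * ((n:ℝ) - (i:ℝ)) * E) := by
  have hn0 : (0:ℝ) < n := by exact_mod_cast hn
  have h1n : (1:ℝ) ≤ (n:ℝ) := by exact_mod_cast hn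
  have hK0 : (0:ℝ) ≤ 1 - 1/(n:ℝ)^2 := by
    have h1 : (1:ℝ) ≤ (n:ℝ)^2 := by nlinarith
    have : 1/(n:ℝ)^2 ≤ 1 := by
      rw [div_le_one (by positivity)]; exact h1
    linarith
  intro k
  induction k with
  | zero =>
    intro i hi
    rcases Nat.eq_zero_or_pos i with h | h
    · subst h; simpa using h0 0
    rcases eq_or_lt_of_le hi with h' | h'
    · rw [h']
      calc e 0 n ≤ 0 := hN 0
      _ = (1 - 1/(n:ℝ)^2)^0 * ((n:ℝ) * ((n:ℝ) - (n:ℝ)) * E) := by ring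
    have h1 : 1 ≤ i := h
    have h2 : i + 1 ≤ n := h'
    have hi1 : (1:ℝ) ≤ (i:ℝ) := by exact_mod_cast h1
    have hi2 : (i:ℝ) + 1 ≤ (n:ℝ) := by exact_mod_cast h2
    have hw : (1:ℝ) ≤ (i:ℝ) * ((n:ℝ) - (i:ℝ)) := by nlinarith
    have := hinit i h1 h2
    calc e 0 i ≤ E := this
    _ ≤ (i:ℝ) * ((n:ℝ) - (i:ℝ)) * E := by nlinarith
    _ = (1 - 1/(n:ℝ)^2)^0 * ((i:ℝ) * ((n:ℝ) - (i:ℝ)) * E) := by ring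
  | succ k ih =>
    intro i hi
    rcases Nat.eq_zero_or_pos i with h | h
    · subst h
      have : (0:ℝ) ≤ (1 - 1/(n:ℝ)^2)^(k+1) * ((0:ℝ) * ((n:ℝ) - (0:ℝ)) * E) := by
        simp
      simpa using le_trans (h0 (k+1)) (by simpa using this)
    rcases eq_or_lt_of_le hi with h' | h'
    · rw [h']
      calc e (k+1) n ≤ 0 := hN (k+1)
      _ = (1 - 1/(n:ℝ)^2)^(k+1) * ((n:ℝ) * ((n:ℝ) - (n:ℝ)) * E) := by ring
    have h1 : 1 ≤ i := h
    have h2 : i + 1 ≤ n := h'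
    have hi1 : (1:ℝ) ≤ (i:ℝ) := by exact_mod_cast h1
    have hi2 : (i:ℝ) + 1 ≤ (n:ℝ) := by exact_mod_cast h2
    have ha := ih (i-1) (by omega)
    have hb := ih (i+1) (by omega)
    have hcast : ((i-1 : ℕ) : ℝ) = (i:ℝ) - 1 := by
      have : (1:ℕ) ≤ i := h1
      push_cast [this]; ring
    rw [hcast] at ha
    have hb' : ((i+1 : ℕ) : ℝ) = (i:ℝ) + 1 := by push_cast; ring
    rw [hb'] at hb
    have hKk : (0:ℝ) ≤ (1 - 1/(n:ℝ)^2)^k := pow_nonneg hK0 k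
    -- key algebraic step
    set K := 1 - 1/(n:ℝ)^2 with hK
    set c := (i:ℝ) with hc
    set N := (n:ℝ) with hNdef
    have hKN : K * N^2 = N^2 - 1 := by
      rw [hK]; field_simp
    have h1K : 0 ≤ 1 - K := by
      rw [hK]
      have : (0:ℝ) ≤ 1/N^2 := by positivity
      linarith
    clear_value K c N
    have hwsum : ((c-1) * (N - (c-1)) + (c+1) * (N - (c+1)))/2 = c*(N-c) - 1 := by ring
    have hwle : c * (N - c) ≤ N^2 := by nlinarith
    have hstep : c*(N-c) - 1 ≤ K * (c*(N-c)) := by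
      have hprod : 0 ≤ (1-K)*(N^2 - (c*(N-c))) := mul_nonneg h1K (by linarith)
      nlinarith [hprod, hKN]
    calc e (k+1) i ≤ (e k (i-1) + e k (i+1))/2 := hrec k i h1 h2
      _ ≤ (K^k * ((c-1) * (N - (c-1)) * E) + K^k * ((c+1) * (N - (c+1)) * E))/2 := by
          linarith
      _ = K^k * E * (((c-1) * (N - (c-1)) + (c+1) * (N - (c+1)))/2) := by ring
      _ = K^k * E * (c*(N-c) - 1) := by rw [hwsum]
      _ ≤ K^k * E * (K * (c*(N-c))) := by
          apply mul_le_mul_of_nonneg_left hstep (by positivity)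
      _ = K^(k+1) * (c * (N - c) * E) := by ring


lemma mdsb_Klim (n : ℕ) (hn : 1 ≤ n) (c : ℝ) :
    Tendsto (fun k => (1 - 1/(n:ℝ)^2)^k * c) atTop (nhds 0) := by
  have h1n : (1:ℝ) ≤ (n:ℝ) := by exact_mod_cast hn
  have hK0 : (0:ℝ) ≤ 1 - 1/(n:ℝ)^2 := by
    have h1 : (1:ℝ) ≤ (n:ℝ)^2 := by nlinarith
    have : 1/(n:ℝ)^2 ≤ 1 := by rw [div_le_one (by positivity)]; exact h1
    linarith
  have hK1 : 1 - 1/(n:ℝ)^2 < 1 := by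
    have : (0:ℝ) < 1/(n:ℝ)^2 := by positivity
    linarith
  have := (tendsto_pow_atTop_nhds_zero_of_lt_one hK0 hK1).mul_const c
  simpa using this

lemma mdsb_convex_le_zero (n : ℕ) (hn : 1 ≤ n) (h : ℕ → ℝ)
    (h0 : h 0 ≤ 0) (hN : h n ≤ 0)
    (hconv : ∀ i, 1 ≤ i → i + 1 ≤ n → h i ≤ (h (i-1) + h (i+1))/2) :
    ∀ i ≤ n, h i ≤ 0 := by
  set E := max 0 ((Finset.range (n+1)).sup' (by simp) h) with hE
  have hE0 : 0 ≤ E := le_max_left _ _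
  have hEb : ∀ i, i ≤ n → h i ≤ E := by
    intro i hi
    refine le_trans (Finset.le_sup' h ?_) (le_max_right _ _)
    simp [Nat.lt_succ_iff]; omega
  have key := mdsb_wkey n hn (fun _ i => h i) E hE0 (fun _ => h0) (fun _ => hN)
    (fun i h1 h2 => hEb i (by omega)) (fun k i h1 h2 => hconv i h1 h2)
  intro i hi
  exact ge_of_tendsto' (mdsb_Klim n hn ((i:ℝ) * ((n:ℝ) - (i:ℝ)) * E)) (fun k => key k i hi)


lemma mdsb_mem0 : (0:ℝ) ∈ Set.Icc (0:ℝ) 1 := by norm_num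
lemma mdsb_mem1 : (1:ℝ) ∈ Set.Icc (0:ℝ) 1 := by norm_num
lemma mdsb_memh : (1/2:ℝ) ∈ Set.Icc (0:ℝ) 1 := by norm_num

lemma mdsb_self {X : Type*} [MetricSpace X] (σ : X → X → ℝ → X) (hgeo : IsGeodesicBicombing σ) (b : X) : σ b b (1/2) = b := by
  have := hgeo.2.2 b b (1/2) mdsb_memh 0 mdsb_mem0
  rw [dist_self] at this
  simp only [mul_zero] at this
  have h2 := dist_eq_zero.mp this
  rw [h2, hgeo.1]

lemma mdsb_unique {X : Type*} [MetricSpace X] (σ : X → X → ℝ → X) (hcon : IsConical σ) (n : ℕ) (hn : 1 ≤ n) (x y : X) (p q : ℕ → X)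
    (hp : IsMidpointChain σ n x y p) (hq : IsMidpointChain σ n x y q) :
    ∀ i ≤ n, q i = p i := by
  have key := mdsb_convex_le_zero n hn (fun i => dist (q i) (p i)) ?_ ?_ ?_
  · intro i hi
    have := key i hi
    have h2 : dist (q i) (p i) = 0 := le_antisymm this dist_nonneg
    exact dist_eq_zero.mp h2
  · simp [hp.1, hq.1]
  · simp [hp.2.1, hq.2.1]
  · intro i h1 h2
    rw [hp.2.2 i h1 h2, hq.2.2 i h1 h2]
    have := hcon (q (i-1)) (q (i+1)) (p (i-1)) (p (i+1)) (1/2) mdsb_memh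
    linarith

lemma mdsb_consec {X : Type*} [MetricSpace X] (σ : X → X → ℝ → X) (hgeo : IsGeodesicBicombing σ) (hcon : IsConical σ)
    (m : ℕ) (hm : 1 ≤ m) (a b : X) (p : ℕ → X) (hp : IsMidpointChain σ m a b p) :
    ∀ i, i + 1 ≤ m → dist (p i) (p (i+1)) = dist a b / m := by
  have hm0 : (0:ℝ) < m := by exact_mod_cast hm
  -- step 1 : neighbors equal
  have hstep : ∀ i, 1 ≤ i → i + 1 ≤ m → dist (p (i-1)) (p i) = dist (p i) (p (i+1)) := by
    intro i h1 h2
    have hmid := hp.2.2 i h1 h2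
    have e0 : p (i-1) = σ (p (i-1)) (p (i+1)) 0 := (hgeo.1 _ _).symm
    have e1 : p (i+1) = σ (p (i-1)) (p (i+1)) 1 := (hgeo.2.1 _ _).symm
    have d1 := hgeo.2.2 (p (i-1)) (p (i+1)) 0 mdsb_mem0 (1/2) mdsb_memh
    rw [hgeo.1, ← hmid] at d1
    have d2 := hgeo.2.2 (p (i-1)) (p (i+1)) (1/2) mdsb_memh 1 mdsb_mem1
    rw [hgeo.2.1, ← hmid] at d2
    rw [d1, d2]
    norm_num
  -- step 2 : all consecutive distances equal dist (p 0) (p 1)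
  have hcc : ∀ i, i + 1 ≤ m → dist (p i) (p (i+1)) = dist (p 0) (p 1) := by
    intro i
    induction i with
    | zero => intro _; rfl
    | succ i ih =>
      intro h2
      have := hstep (i+1) (by omega) h2
      simp only [Nat.add_sub_cancel] at this
      rw [← this]
      exact ih (by omega)
  -- step 3 : triangle
  have htri : ∀ j, j ≤ m → dist (p 0) (p j) ≤ (j:ℝ) * dist (p 0) (p 1) := by
    intro j
    induction j with
    | zero => intro _; simp
    | succ j ih =>
      intro hj
      have h1 := ih (by omega)
      have h2 : dist (p j) (p (j+1)) = dist (p 0) (p 1) := hcc j hj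
      have h3 := dist_triangle (p 0) (p j) (p (j+1))
      push_cast
      nlinarith [dist_nonneg (x := p 0) (y := p 1)]
  -- step 4 : convexity of g i = dist (p i) b
  have hg : ∀ i, i ≤ m → dist (p i) b ≤ dist a b * (((m:ℝ) - i)/m) := by
    have key := mdsb_convex_le_zero m hm
      (fun i => dist (p i) b - dist a b * (((m:ℝ) - i)/m)) ?_ ?_ ?_
    · intro i hi
      have := key i hi
      linarith
    · simp only [Nat.cast_zero, sub_zero, hp.1]
      have : dist a b * ((m:ℝ)/m) = dist a b := by field_simp
      rw [this]; simp
    · simp only [sub_self, zero_div, mul_zero, hp.2.1, dist_self]; simp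
    · intro i h1 h2
      have hmid := hp.2.2 i h1 h2
      have hb : σ b b (1/2) = b := mdsb_self σ hgeo b
      have hconv : dist (p i) b ≤ (dist (p (i-1)) b + dist (p (i+1)) b)/2 := by
        have := hcon (p (i-1)) (p (i+1)) b b (1/2) mdsb_memh
        rw [← hmid, hb] at this
        linarith
      have hcast : ((i-1 : ℕ) : ℝ) = (i:ℝ) - 1 := by
        have : (1:ℕ) ≤ i := h1
        push_cast [this]; ring
      rw [hcast]
      push_cast
      have hlin : dist a b * (((m:ℝ) - ((i:ℝ)-1))/m)/2 + dist a b * (((m:ℝ) - ((i:ℝ)+1))/m)/2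
          = dist a b * (((m:ℝ) - i)/m) := by
        field_simp; ring
      linarith
  -- step 5 : conclude
  have hc1 : dist (p (m-1)) (p m) = dist (p 0) (p 1) := by
    have := hcc (m-1) (by omega)
    have hm1 : m - 1 + 1 = m := by omega
    rw [hm1] at this
    exact this
  have hcast : ((m-1 : ℕ) : ℝ) = (m:ℝ) - 1 := by
    push_cast [hm]; ring
  have hub : dist (p 0) (p 1) ≤ dist a b / m := by
    have h4 := hg (m-1) (by omega)
    rw [hcast] at h4
    rw [← hc1]
    have hpm : p m = b := hp.2.1
    rw [hpm] at hc1 ⊢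
    calc dist (p (m-1)) b ≤ dist a b * (((m:ℝ) - ((m:ℝ)-1))/m) := h4
    _ = dist a b / m := by field_simp; ring
  have hlb : dist a b ≤ (m:ℝ) * dist (p 0) (p 1) := by
    have := htri m (le_refl m)
    rw [hp.2.1] at this
    nth_rewrite 1 [← hp.1]
    exact this
  have hc : dist (p 0) (p 1) = dist a b / m := by
    refine le_antisymm hub ?_
    rw [div_le_iff₀ hm0]
    linarith
  intro i hi
  rw [hcc i hi, hc]

lemma mdsb_chain_dist {X : Type*} [MetricSpace X] (σ : X → X → ℝ → X) (hgeo : IsGeodesicBicombing σ) (hcon : IsConical σ)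
    (m : ℕ) (hm : 1 ≤ m) (a b : X) (p : ℕ → X) (hp : IsMidpointChain σ m a b p) :
    ∀ i j, i ≤ j → j ≤ m → dist (p i) (p j) = ((j:ℝ) - (i:ℝ)) * (dist a b / m) := by
  intro i j hij hjm
  rcases eq_or_lt_of_le hij with h | h
  · subst h; simp
  · -- subchain from i to j
    have hji : 1 ≤ j - i := by omega
    set q : ℕ → X := fun k => p (i + k) with hq
    have hchain : IsMidpointChain σ (j-i) (p i) (p j) q := by
      refine ⟨by simp [hq], ?_, ?_⟩
      · simp only [hq]
        congr 1
        omega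
      · intro k h1 h2
        have e1 : i + k - 1 = i + (k-1) := by omega
        have e2 : i + k + 1 = i + (k+1) := by omega
        have := hp.2.2 (i+k) (by omega) (by omega)
        simp only [hq]
        rw [← e2, ← e1] at *
        convert this using 3 <;> omega
    have h1 := mdsb_consec σ hgeo hcon (j-i) hji (p i) (p j) q hchain 0 (by omega)
    have h2 := mdsb_consec σ hgeo hcon m hm a b p hp i (by omega)
    have hq01 : dist (q 0) (q 1) = dist (p i) (p (i+1)) := by simp [hq]
    rw [hq01, h2] at h1
    have hcast : ((j - i : ℕ) : ℝ) = (j:ℝ) - (i:ℝ) := by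
      push_cast [hij]; ring
    have hm0 : (0:ℝ) < (m:ℝ) := by exact_mod_cast hm
    have hji0 : (0:ℝ) < (j:ℝ) - (i:ℝ) := by
      have : (i:ℝ) < (j:ℝ) := by exact_mod_cast h
      linarith
    rw [hcast] at h1
    rw [div_eq_div_iff (ne_of_gt hm0) (ne_of_gt hji0)] at h1
    field_simp
    linarith [h1]


lemma mdsb_exists {X : Type*} [MetricSpace X] [ProperSpace X]
    (σ : X → X → ℝ → X) (hgeo : IsGeodesicBicombing σ) (hcon : IsConical σ)
    (n : ℕ) (hn : 1 ≤ n) (x y : X) :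
    ∃ p : ℕ → X, IsMidpointChain σ n x y p := by
  classical
  set T : (ℕ → X) → (ℕ → X) :=
    fun p i => if i = 0 then x else if n ≤ i then y else σ (p (i-1)) (p (i+1)) (1/2) with hT
  set s : ℕ → ℕ → X := fun k => T^[k] (fun i => if i = 0 then x else y) with hs
  have hsucc : ∀ k, s (k+1) = T (s k) := by
    intro k
    simp only [hs]
    rw [Function.iterate_succ_apply']
  have hs0 : ∀ k, s k 0 = x := by
    intro k
    cases k with
    | zero => simp [hs]
    | succ k => rw [hsucc]; simp [hT]
  have hsy : ∀ k i, n ≤ i → s k i = y := by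
    intro k i hi
    have hi0 : i ≠ 0 := by omega
    cases k with
    | zero => simp [hs, hi0]
    | succ k => rw [hsucc]; simp [hT, hi0, hi]
  have hsint : ∀ k i, 1 ≤ i → i + 1 ≤ n → s (k+1) i = σ (s k (i-1)) (s k (i+1)) (1/2) := by
    intro k i h1 h2
    rw [hsucc]
    simp only [hT]
    rw [if_neg (by omega), if_neg (by omega)]
  -- the displacement bound
  set e : ℕ → ℕ → ℝ := fun k i => dist (s k i) (s (k+1) i) with he
  have key := mdsb_wkey n hn e (dist x y) dist_nonneg ?_ ?_ ?_ ?_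
  · -- Cauchy in each coordinate
    have hC : ∀ i, CauchySeq (fun k => s k i) := by
      intro i
      by_cases hi : n ≤ i
      · have : (fun k => s k i) = fun _ => y := by
          funext k; exact hsy k i hi
        rw [this]
        exact cauchySeq_const y
      · push_neg at hi
        apply cauchySeq_of_le_geometric (1 - 1/(n:ℝ)^2) ((i:ℝ) * ((n:ℝ) - (i:ℝ)) * dist x y)
        · have h1n : (1:ℝ) ≤ (n:ℝ) := by exact_mod_cast hn
          have : (0:ℝ) < 1/(n:ℝ)^2 := by positivity
          linarith
        · intro k
          have := key k i (by omega)
          calc dist (s k i) (s (k+1) i) = e k i := rfl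
          _ ≤ (1 - 1/(n:ℝ)^2)^k * ((i:ℝ) * ((n:ℝ) - (i:ℝ)) * dist x y) := this
          _ = (i:ℝ) * ((n:ℝ) - (i:ℝ)) * dist x y * (1 - 1/(n:ℝ)^2)^k := by ring
    have hlim : ∀ i, ∃ z : X, Tendsto (fun k => s k i) atTop (nhds z) :=
      fun i => cauchySeq_tendsto_of_complete (hC i)
    choose p hp using hlim
    refine ⟨p, ?_, ?_, ?_⟩
    · refine tendsto_nhds_unique (hp 0) ?_
      have : (fun k => s k 0) = fun _ => x := funext hs0
      rw [this]; exact tendsto_const_nhds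
    · refine tendsto_nhds_unique (hp n) ?_
      have : (fun k => s k n) = fun _ => y := funext (fun k => hsy k n (le_refl n))
      rw [this]; exact tendsto_const_nhds
    · intro i h1 h2
      have hshift : Tendsto (fun k => s (k+1) i) atTop (nhds (p i)) :=
        (hp i).comp (tendsto_add_atTop_nat 1)
      have heq : (fun k => s (k+1) i) = fun k => σ (s k (i-1)) (s k (i+1)) (1/2) :=
        funext (fun k => hsint k i h1 h2)
      rw [heq] at hshift
      refine tendsto_nhds_unique hshift ?_
      rw [tendsto_iff_dist_tendsto_zero]
      have hbnd : ∀ k, dist (σ (s k (i-1)) (s k (i+1)) (1/2)) (σ (p (i-1)) (p (i+1)) (1/2))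
          ≤ (1 - 1/2) * dist (s k (i-1)) (p (i-1)) + (1/2) * dist (s k (i+1)) (p (i+1)) :=
        fun k => hcon _ _ _ _ (1/2) mdsb_memh
      have hd1 : Tendsto (fun k => dist (s k (i-1)) (p (i-1))) atTop (nhds 0) :=
        tendsto_iff_dist_tendsto_zero.mp (hp (i-1))
      have hd2 : Tendsto (fun k => dist (s k (i+1)) (p (i+1))) atTop (nhds 0) :=
        tendsto_iff_dist_tendsto_zero.mp (hp (i+1))
      have hsum : Tendsto (fun k => (1 - 1/2) * dist (s k (i-1)) (p (i-1))
          + (1/2) * dist (s k (i+1)) (p (i+1))) atTop (nhds 0) := by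
        have := (hd1.const_mul (1 - 1/2 : ℝ)).add (hd2.const_mul (1/2 : ℝ))
        simpa using this
      exact squeeze_zero (fun k => dist_nonneg) hbnd hsum
  · intro k
    simp only [he, hs0, dist_self, le_refl]
  · intro k
    simp only [he, hsy _ _ (le_refl n), dist_self, le_refl]
  · -- initial bound
    intro i h1 h2
    have hi0 : i ≠ 0 := by omega
    have hs0i : s 0 i = y := by simp [hs, hi0]
    have hs0i1 : s 0 (i+1) = y := by simp [hs]
    have hs1 : s 1 i = σ (s 0 (i-1)) (s 0 (i+1)) (1/2) := hsint 0 i h1 h2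
    have ha : dist (s 0 (i-1)) y ≤ dist x y := by
      by_cases h : i = 1
      · subst h
        have : s 0 0 = x := hs0 0
        simp [this]
      · have : i - 1 ≠ 0 := by omega
        have : s 0 (i-1) = y := by simp [hs, this]
        simp [this, dist_nonneg]
    have hdist : dist (s 0 i) (s 1 i) = (1/2) * dist (s 0 (i-1)) y := by
      rw [hs0i, hs1, hs0i1]
      have := hgeo.2.2 (s 0 (i-1)) y 1 mdsb_mem1 (1/2) mdsb_memh
      rw [hgeo.2.1] at this
      rw [this]
      norm_num
    simp only [he]
    rw [hdist]
    linarith [dist_nonneg (x := s 0 (i-1)) (y := y)]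
  · -- recursion
    intro k i h1 h2
    simp only [he]
    rw [hsint k i h1 h2, hsint (k+1) i h1 h2]
    have := hcon (s k (i-1)) (s k (i+1)) (s (k+1) (i-1)) (s (k+1) (i+1)) (1/2) mdsb_memh
    linarith


noncomputable def mdsbIdx (n : ℕ) (t : ℝ) : ℕ := min ⌊t * n⌋₊ (n-1)

lemma mdsbIdx_le (n : ℕ) (hn : 1 ≤ n) (t : ℝ) : mdsbIdx n t + 1 ≤ n := by
  unfold mdsbIdx; omega

lemma mdsbIdx_lam_lb (n : ℕ) (t : ℝ) (ht : 0 ≤ t) : ((mdsbIdx n t : ℕ) : ℝ) ≤ t * n := by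
  have h1 : (mdsbIdx n t : ℕ) ≤ ⌊t*n⌋₊ := min_le_left _ _
  have h2 : ((⌊t*n⌋₊ : ℕ) : ℝ) ≤ t*n := Nat.floor_le (by positivity)
  calc ((mdsbIdx n t : ℕ):ℝ) ≤ ((⌊t*n⌋₊ : ℕ) : ℝ) := by exact_mod_cast h1
  _ ≤ t*n := h2

lemma mdsbIdx_lam_ub (n : ℕ) (hn : 1 ≤ n) (t : ℝ) (ht : t ≤ 1) :
    t * n ≤ ((mdsbIdx n t : ℕ) : ℝ) + 1 := by
  by_cases hc : ⌊t*n⌋₊ ≤ n - 1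
  · have h : mdsbIdx n t = ⌊t*n⌋₊ := min_eq_left hc
    rw [h]
    exact le_of_lt (Nat.lt_floor_add_one _)
  · have h : mdsbIdx n t = n - 1 := min_eq_right (by omega)
    rw [h]
    have hcast : ((n-1:ℕ):ℝ) + 1 = (n:ℝ) := by push_cast [hn]; ring
    rw [hcast]
    have hn0 : (0:ℝ) ≤ (n:ℝ) := by positivity
    nlinarith

lemma mdsbIdx_mono (n : ℕ) {s t : ℝ} (hst : s ≤ t) : mdsbIdx n s ≤ mdsbIdx n t := by
  unfold mdsbIdx
  have hn0 : (0:ℝ) ≤ (n:ℝ) := by positivity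
  exact min_le_min (Nat.floor_mono (by nlinarith)) (le_refl _)

/-- distance between points on two segments of the chain -/
lemma mdsb_seg_dist {X : Type*} [MetricSpace X] (σ : X → X → ℝ → X)
    (hgeo : IsGeodesicBicombing σ) (n : ℕ) (hn : 1 ≤ n) (x y : X) (P : ℕ → X)
    (hPd : ∀ i j, i ≤ j → j ≤ n → dist (P i) (P j) = ((j:ℝ)-(i:ℝ)) * (dist x y / n))
    (i j : ℕ) (hi : i + 1 ≤ n) (hj : j + 1 ≤ n) (hij : i ≤ j)
    (lam mu : ℝ) (hl : lam ∈ Set.Icc (0:ℝ) 1) (hm : mu ∈ Set.Icc (0:ℝ) 1)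
    (hle : (i:ℝ) + lam ≤ (j:ℝ) + mu) :
    dist (σ (P i) (P (i+1)) lam) (σ (P j) (P (j+1)) mu)
      = ((j:ℝ) + mu - (i:ℝ) - lam) * (dist x y / n) := by
  have hseg : ∀ k, k + 1 ≤ n → dist (P k) (P (k+1)) = dist x y / n := by
    intro k hk
    rw [hPd k (k+1) (by omega) hk]
    push_cast; ring
  rcases eq_or_lt_of_le hij with he | hlt
  · subst he
    have hd := hgeo.2.2 (P i) (P (i+1)) lam hl mu hm
    rw [hd, hseg i hi]
    have hlm : lam ≤ mu := by
      have : (i:ℝ) + lam ≤ (i:ℝ) + mu := hle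
      linarith
    rw [abs_of_nonpos (by linarith)]
    ring
  · have hij1 : i + 1 ≤ j := hlt
    have d1 : dist (σ (P i) (P (i+1)) lam) (P (i+1)) = (1 - lam) * (dist x y / n) := by
      have h := hgeo.2.2 (P i) (P (i+1)) lam hl 1 mdsb_mem1
      rw [hgeo.2.1] at h
      rw [h, hseg i hi, abs_of_nonpos (by linarith [hl.2])]
      ring
    have d2 : dist (P (i+1)) (P j) = ((j:ℝ) - (i:ℝ) - 1) * (dist x y / n) := by
      rw [hPd (i+1) j hij1 (by omega)]
      push_cast; ring
    have d3 : dist (P j) (σ (P j) (P (j+1)) mu) = mu * (dist x y / n) := by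
      have h := hgeo.2.2 (P j) (P (j+1)) 0 mdsb_mem0 mu hm
      rw [hgeo.1] at h
      rw [h, hseg j hj, abs_of_nonpos (by linarith [hm.1])]
      ring
    have d4 : dist (P i) (σ (P i) (P (i+1)) lam) = lam * (dist x y / n) := by
      have h := hgeo.2.2 (P i) (P (i+1)) 0 mdsb_mem0 lam hl
      rw [hgeo.1] at h
      rw [h, hseg i hi, abs_of_nonpos (by linarith [hl.1])]
      ring
    have d5 : dist (σ (P j) (P (j+1)) mu) (P (j+1)) = (1 - mu) * (dist x y / n) := by
      have h := hgeo.2.2 (P j) (P (j+1)) mu hm 1 mdsb_mem1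
      rw [hgeo.2.1] at h
      rw [h, hseg j hj, abs_of_nonpos (by linarith [hm.2])]
      ring
    have d6 : dist (P i) (P (j+1)) = ((j:ℝ) + 1 - (i:ℝ)) * (dist x y / n) := by
      rw [hPd i (j+1) (by omega) (by omega)]
      push_cast; ring
    have hub := dist_triangle4 (σ (P i) (P (i+1)) lam) (P (i+1)) (P j) (σ (P j) (P (j+1)) mu)
    have hlb := dist_triangle4 (P i) (σ (P i) (P (i+1)) lam) (σ (P j) (P (j+1)) mu) (P (j+1))
    rw [d1, d2, d3] at hub
    rw [d4, d5, d6] at hlb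
    refine le_antisymm ?_ ?_
    · calc dist (σ (P i) (P (i+1)) lam) (σ (P j) (P (j+1)) mu)
          ≤ (1 - lam) * (dist x y / n) + ((j:ℝ) - (i:ℝ) - 1) * (dist x y / n)
            + mu * (dist x y / n) := by
            linarith [hub]
      _ = ((j:ℝ) + mu - (i:ℝ) - lam) * (dist x y / n) := by ring
    · linarith [hlb]

lemma mdsb_sigma_n {X : Type*} [MetricSpace X]
    (σ : X → X → ℝ → X) (hgeo : IsGeodesicBicombing σ) (hcon : IsConical σ)
    (n : ℕ) (hn : 1 ≤ n) (P : X → X → ℕ → X)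
    (hP : ∀ x y, IsMidpointChain σ n x y (P x y))
    (huniq : ∀ x y (q : ℕ → X), IsMidpointChain σ n x y q → ∀ i ≤ n, q i = P x y i) :
    ∃ σn : X → X → ℝ → X, IsGeodesicBicombing σn ∧ IsConical σn ∧
      ∀ (x y : X) (p : ℕ → X), IsMidpointChain σ n x y p →
        ∀ i : ℕ, i + 1 ≤ n → ∀ lam ∈ Set.Icc (0:ℝ) 1,
          σn x y ((1 - lam) * ((i : ℝ) / n) + lam * (((i : ℝ) + 1) / n)) =
            σ (p i) (p (i + 1)) lam := by
  have hn0 : (0:ℝ) < n := by exact_mod_cast hn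
  have hPd : ∀ x y : X, ∀ i j, i ≤ j → j ≤ n →
      dist (P x y i) (P x y j) = ((j:ℝ)-(i:ℝ)) * (dist x y / n) :=
    fun x y => mdsb_chain_dist σ hgeo hcon n hn x y (P x y) (hP x y)
  refine ⟨fun x y t => σ (P x y (mdsbIdx n t)) (P x y (mdsbIdx n t + 1)) (t * n - mdsbIdx n t),
    ⟨?_, ?_, ?_⟩, ?_, ?_⟩
  · -- σn x y 0 = x
    intro x y
    have h0 : mdsbIdx n 0 = 0 := by unfold mdsbIdx; simp
    simp only [h0]
    rw [show (0:ℝ) * (n:ℝ) - ((0:ℕ):ℝ) = 0 by norm_num, hgeo.1]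
    exact (hP x y).1
  · -- σn x y 1 = y
    intro x y
    have h1 : mdsbIdx n 1 = n - 1 := by
      unfold mdsbIdx
      have : ⌊(1:ℝ) * n⌋₊ = n := by rw [one_mul, Nat.floor_natCast]
      rw [this]; omega
    simp only [h1]
    rw [show (1:ℝ) * (n:ℝ) - ((n-1:ℕ):ℝ) = 1 by push_cast [hn]; ring, hgeo.2.1]
    rw [show n - 1 + 1 = n by omega]
    exact (hP x y).2.1
  · -- geodesic distance property
    intro x y s hs t ht
    simp only
    have main : ∀ u v : ℝ, u ∈ Set.Icc (0:ℝ) 1 → v ∈ Set.Icc (0:ℝ) 1 → u ≤ v →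
        dist (σ (P x y (mdsbIdx n u)) (P x y (mdsbIdx n u + 1)) (u * n - mdsbIdx n u))
             (σ (P x y (mdsbIdx n v)) (P x y (mdsbIdx n v + 1)) (v * n - mdsbIdx n v))
          = (v - u) * dist x y := by
      intro u v hu hv huv
      have hiu := mdsbIdx_le n hn u
      have hiv := mdsbIdx_le n hn v
      have hl : (u * n - (mdsbIdx n u : ℝ)) ∈ Set.Icc (0:ℝ) 1 :=
        ⟨by linarith [mdsbIdx_lam_lb n u hu.1], by linarith [mdsbIdx_lam_ub n hn u hu.2]⟩
      have hm : (v * n - (mdsbIdx n v : ℝ)) ∈ Set.Icc (0:ℝ) 1 :=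
        ⟨by linarith [mdsbIdx_lam_lb n v hv.1], by linarith [mdsbIdx_lam_ub n hn v hv.2]⟩
      have hle : ((mdsbIdx n u : ℕ):ℝ) + (u * n - (mdsbIdx n u : ℝ))
          ≤ ((mdsbIdx n v : ℕ):ℝ) + (v * n - (mdsbIdx n v : ℝ)) := by
        have h2 : u * n ≤ v * n := mul_le_mul_of_nonneg_right huv hn0.le
        linarith
      have hsd := mdsb_seg_dist σ hgeo n hn x y (P x y) (hPd x y)
        (mdsbIdx n u) (mdsbIdx n v) hiu hiv (mdsbIdx_mono n huv)
        _ _ hl hm hle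
      rw [hsd]
      rw [show ((mdsbIdx n v : ℕ):ℝ) + (v * n - (mdsbIdx n v : ℝ)) - (mdsbIdx n u : ℝ)
          - (u * n - (mdsbIdx n u : ℝ)) = (v-u)*n by ring]
      field_simp
    rcases le_total s t with h | h
    · rw [main s t hs ht h, abs_sub_comm, abs_of_nonneg (by linarith)]
    · rw [dist_comm, main t s ht hs h, abs_of_nonneg (by linarith)]
  · -- conical
    intro x y x' y' t ht
    simp only
    set i := mdsbIdx n t with hidef
    have hi1 : i + 1 ≤ n := mdsbIdx_le n hn t
    have hl : (t * n - (i:ℝ)) ∈ Set.Icc (0:ℝ) 1 :=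
      ⟨by linarith [mdsbIdx_lam_lb n t ht.1], by linarith [mdsbIdx_lam_ub n hn t ht.2]⟩
    have he : ∀ j ≤ n, dist (P x y j) (P x' y' j)
        ≤ (1 - (j:ℝ)/n) * dist x x' + ((j:ℝ)/n) * dist y y' := by
      have key := mdsb_convex_le_zero n hn
        (fun j => dist (P x y j) (P x' y' j)
          - ((1 - (j:ℝ)/n) * dist x x' + ((j:ℝ)/n) * dist y y')) ?_ ?_ ?_
      · intro j hj; have := key j hj; linarith
      · simp only [Nat.cast_zero, zero_div]
        rw [(hP x y).1, (hP x' y').1]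
        norm_num
      · rw [(hP x y).2.1, (hP x' y').2.1]
        have hnn : (n:ℝ)/n = 1 := by field_simp
        rw [hnn]
        have : (1 - (1:ℝ))*dist x x' + 1*dist y y' = dist y y' := by ring
        rw [this]
        simp
      · intro j h1 h2
        have hmid1 := (hP x y).2.2 j h1 h2
        have hmid2 := (hP x' y').2.2 j h1 h2
        have hc := hcon (P x y (j-1)) (P x y (j+1)) (P x' y' (j-1)) (P x' y' (j+1))
          (1/2) mdsb_memh
        rw [← hmid1, ← hmid2] at hc
        have hcast : ((j-1:ℕ):ℝ) = (j:ℝ) - 1 := by push_cast [h1]; ring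
        rw [hcast]
        push_cast
        have hlin : (1 - ((j:ℝ)-1)/n) * dist x x' + (((j:ℝ)-1)/n) * dist y y'
            + ((1 - ((j:ℝ)+1)/n) * dist x x' + (((j:ℝ)+1)/n) * dist y y')
            = 2*((1 - (j:ℝ)/n) * dist x x' + ((j:ℝ)/n) * dist y y') := by
          field_simp; ring
        linarith
    have hc2 := hcon (P x y i) (P x y (i+1)) (P x' y' i) (P x' y' (i+1)) (t * n - (i:ℝ)) hl
    have hei := he i (by omega)
    have hei1 := he (i+1) (by omega)
    have hcast1 : ((i+1:ℕ):ℝ) = (i:ℝ)+1 := by push_cast; ring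
    rw [hcast1] at hei1
    have halg : (1 - (t * n - (i:ℝ))) * ((1 - (i:ℝ)/n) * dist x x' + ((i:ℝ)/n) * dist y y')
        + (t * n - (i:ℝ)) * ((1 - ((i:ℝ)+1)/n) * dist x x' + (((i:ℝ)+1)/n) * dist y y')
        = (1 - t) * dist x x' + t * dist y y' := by
      field_simp; ring
    have h1l : (0:ℝ) ≤ 1 - (t * (n:ℝ) - (i:ℝ)) := by linarith [hl.2]
    have h2l : (0:ℝ) ≤ t * (n:ℝ) - (i:ℝ) := hl.1
    have step2 := add_le_add (mul_le_mul_of_nonneg_left hei h1l)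
      (mul_le_mul_of_nonneg_left hei1 h2l)
    exact le_trans hc2 (le_trans step2 (le_of_eq halg))
  · -- characterization
    intro x y p hp i hi1 lam hlam
    have hq : ∀ j ≤ n, p j = P x y j := huniq x y p hp
    have ht : (1 - lam) * ((i:ℝ)/n) + lam * (((i:ℝ)+1)/n) = ((i:ℝ) + lam)/n := by
      field_simp; ring
    simp only
    rw [ht]
    have htn : (((i:ℝ)+lam)/n) * n = (i:ℝ) + lam := by field_simp
    by_cases hl1 : lam < 1
    · have hfl : ⌊(((i:ℝ)+lam)/n) * n⌋₊ = i := by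
        rw [htn]
        rw [Nat.floor_eq_iff (by linarith [hlam.1, (by positivity : (0:ℝ) ≤ (i:ℝ))])]
        constructor
        · linarith [hlam.1]
        · push_cast; linarith
      have hidxv : mdsbIdx n (((i:ℝ)+lam)/n) = i := by
        unfold mdsbIdx
        rw [show (((i:ℝ)+lam)/n) * (n:ℕ) = (((i:ℝ)+lam)/n) * (n:ℝ) from rfl, hfl]
        exact min_eq_left (by omega)
      rw [hidxv]
      rw [show (((i:ℝ)+lam)/n) * (n:ℝ) - ((i:ℕ):ℝ) = lam by rw [htn]; ring]
      rw [hq i (by omega), hq (i+1) hi1]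
    · have hl : lam = 1 := le_antisymm hlam.2 (not_lt.mp hl1)
      subst hl
      have hfl : ⌊(((i:ℝ)+1)/n) * n⌋₊ = i + 1 := by
        rw [htn]
        rw [show ((i:ℝ)+1) = ((i+1:ℕ):ℝ) by push_cast; ring, Nat.floor_natCast]
      by_cases h2 : i + 1 ≤ n - 1
      · have hidxv : mdsbIdx n (((i:ℝ)+1)/n) = i + 1 := by
          unfold mdsbIdx
          rw [show (((i:ℝ)+1)/n) * (n:ℕ) = (((i:ℝ)+1)/n) * (n:ℝ) from rfl, hfl]
          exact min_eq_left h2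
        rw [hidxv]
        rw [show (((i:ℝ)+1)/n) * (n:ℝ) - ((i+1:ℕ):ℝ) = 0 by rw [htn]; push_cast; ring]
        rw [hgeo.1, hgeo.2.1]
        exact (hq (i+1) hi1).symm
      · have hidxv : mdsbIdx n (((i:ℝ)+1)/n) = i := by
          unfold mdsbIdx
          rw [show (((i:ℝ)+1)/n) * (n:ℕ) = (((i:ℝ)+1)/n) * (n:ℝ) from rfl, hfl]
          omega
        rw [hidxv]
        rw [show (((i:ℝ)+1)/n) * (n:ℝ) - ((i:ℕ):ℝ) = 1 by rw [htn]; ring]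
        rw [hq i (by omega), hq (i+1) hi1]


/-- **Lemma 5.2.** Let `X` be a proper metric space with a conical geodesic bicombing `σ` and
let `n ≥ 1`. For all `x, y ∈ X` there exist unique points `p 0, …, p n` with `p 0 = x`,
`p n = y` and `p i = σ (p (i-1)) (p (i+1)) (1/2)` for `1 ≤ i ≤ n-1`; moreover, the map
`σ⁽ⁿ⁾` defined by `σ⁽ⁿ⁾ x y ((1-λ) i/n + λ (i+1)/n) = σ (p i) (p (i+1)) λ` is a conical
geodesic bicombing on `X`. -/
theorem midpoint_subdivision_bicombing
    {X : Type*} [MetricSpace X] [ProperSpace X]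
    (σ : X → X → ℝ → X) (hgeo : IsGeodesicBicombing σ) (hcon : IsConical σ)
    (n : ℕ) (hn : 1 ≤ n) :
    (∀ x y : X, ∃ p : ℕ → X, IsMidpointChain σ n x y p ∧
      ∀ q : ℕ → X, IsMidpointChain σ n x y q → ∀ i ≤ n, q i = p i) ∧
    ∃ σn : X → X → ℝ → X, IsGeodesicBicombing σn ∧ IsConical σn ∧
      ∀ (x y : X) (p : ℕ → X), IsMidpointChain σ n x y p →
        ∀ i : ℕ, i + 1 ≤ n → ∀ lam ∈ Set.Icc (0:ℝ) 1,
          σn x y ((1 - lam) * ((i : ℝ) / n) + lam * (((i : ℝ) + 1) / n)) =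
            σ (p i) (p (i + 1)) lam := by
  have hex : ∀ x y : X, ∃ p : ℕ → X, IsMidpointChain σ n x y p :=
    fun x y => mdsb_exists σ hgeo hcon n hn x y
  choose P hP using hex
  have huniq : ∀ x y : X, ∀ q : ℕ → X, IsMidpointChain σ n x y q → ∀ i ≤ n, q i = P x y i :=
    fun x y q hq => mdsb_unique σ hcon n hn x y (P x y) q (hP x y) hq
  exact ⟨fun x y => ⟨P x y, hP x y, huniq x y⟩,
    mdsb_sigma_n σ hgeo hcon n hn P hP huniq⟩
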